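/- Assume (𝒞, w) satisfies the factorization axiom. Let f : x → y be a morphism of F𝒞 such that x is bounded and y is weakly bounded. Then there exists a factorization f = p∘i where i : x → u is a monomorphism of F𝒞, p : u → y is a stable weak equivalence, and the filtered object u is bounded. -/

import Mathlib

open CategoryTheory CategoryTheory.Limits ZeroObject

universe v u

/-- An *admissible class* of morphisms in an abelian category: it contains all
isomorphisms, satisfies the two-out-of-three property, and in any morphism of
short exact sequences, if two of the three vertical morphisms lie in the class
then so does the third. -/
structure AdmissibleClass {C : Type u} [Category.{v} C] [Abelian C]
    (w : MorphismProperty C) : Prop where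
  of_isIso : ∀ {x y : C} (f : x ⟶ y), IsIso f → w f
  comp_mem : ∀ {x y z : C} (f : x ⟶ y) (g : y ⟶ z), w f → w g → w (f ≫ g)
  of_comp_left : ∀ {x y z : C} (f : x ⟶ y) (g : y ⟶ z), w g → w (f ≫ g) → w f
  of_comp_right : ∀ {x y z : C} (f : x ⟶ y) (g : y ⟶ z), w f → w (f ≫ g) → w g
  ses_fst : ∀ {S₁ S₂ : ShortComplex C}, S₁.ShortExact → S₂.ShortExact →
    ∀ (φ : S₁ ⟶ S₂), w φ.τ₂ → w φ.τ₃ → w φ.τ₁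
  ses_snd : ∀ {S₁ S₂ : ShortComplex C}, S₁.ShortExact → S₂.ShortExact →
    ∀ (φ : S₁ ⟶ S₂), w φ.τ₁ → w φ.τ₃ → w φ.τ₂
  ses_trd : ∀ {S₁ S₂ : ShortComplex C}, S₁.ShortExact → S₂.ShortExact →
    ∀ (φ : S₁ ⟶ S₂), w φ.τ₁ → w φ.τ₂ → w φ.τ₃

variable {C : Type u} [Category.{v} C] [Abelian C]

/-- The class `lw` of level weak equivalences in the category `F𝒞 = ℕ ⥤ 𝒞` of
filtered objects: morphisms all of whose components lie in `w`. -/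
def LevelWeq (w : MorphismProperty C) : MorphismProperty (ℕ ⥤ C) :=
  fun _ _ f => ∀ n : ℕ, w (f.app n)

/-- The class `w_st` of stable weak equivalences in `F𝒞 = ℕ ⥤ 𝒞`: morphisms
whose components eventually lie in `w`. -/
def StableWeq (w : MorphismProperty C) : MorphismProperty (ℕ ⥤ C) :=
  fun _ _ f => ∃ N : ℕ, ∀ n : ℕ, N ≤ n → w (f.app n)

/-- A filtered object is *weakly bounded* if its transition maps eventually
lie in `w`. -/
def WeaklyBounded (w : MorphismProperty C) (x : ℕ ⥤ C) : Prop :=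
  ∃ N : ℕ, ∀ n : ℕ, N ≤ n → w (x.map (homOfLE (Nat.le_succ n)))

/-- A filtered object is *bounded* if its transition maps are eventually
isomorphisms. -/
def BoundedFiltered (x : ℕ ⥤ C) : Prop :=
  ∃ b : ℕ, ∀ n : ℕ, b ≤ n → IsIso (x.map (homOfLE (Nat.le_succ n)))

/-- The shift `x[1]` of a filtered object: `(x[1])_k = x_{k+1}`. -/
def shiftOne (x : ℕ ⥤ C) : ℕ ⥤ C :=
  (Monotone.functor (f := fun n : ℕ => n + 1) fun _ _ h => Nat.succ_le_succ h) ⋙ x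

/-- The morphism `θ_x : x ⟶ x[1]`, whose component at level `k` is the
transition map `i^x_k : x_k ⟶ x_{k+1}`. -/
def theta (x : ℕ ⥤ C) : x ⟶ shiftOne x where
  app k := x.map (homOfLE (Nat.le_succ k))
  naturality k m f := by
    dsimp [shiftOne, Monotone.functor]
    rw [← x.map_comp, ← x.map_comp]
    exact congrArg x.map (Subsingleton.elim _ _)

namespace FactorAux

variable (x y : ℕ ⥤ C) (N : ℕ) (u₀ : C)

def Xo (n : ℕ) : C := if n < N then x.obj n else u₀

lemma Xo_pos {n : ℕ} (h : n < N) : Xo x N u₀ n = x.obj n := if_pos h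
lemma Xo_neg {n : ℕ} (h : ¬ n < N) : Xo x N u₀ n = u₀ := if_neg h

variable (i₀ : x.obj N ⟶ u₀)

def G (n : ℕ) : Xo x N u₀ n ⟶ Xo x N u₀ (n + 1) :=
  if h1 : n + 1 < N then
    eqToHom (Xo_pos x N u₀ (Nat.lt_of_succ_lt h1)) ≫ x.map (homOfLE (Nat.le_succ n)) ≫
      eqToHom (Xo_pos x N u₀ h1).symm
  else if h2 : n < N then
    eqToHom (Xo_pos x N u₀ h2) ≫ x.map (homOfLE h2.le) ≫ i₀ ≫
      eqToHom (Xo_neg x N u₀ h1).symm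
  else
    eqToHom (by rw [Xo_neg x N u₀ h2, Xo_neg x N u₀ h1])

def U : ℕ ⥤ C := Functor.ofSequence (G x N u₀ i₀)

noncomputable def iapp (hiso : ∀ (n : ℕ) (h : N ≤ n), IsIso (x.map (homOfLE h))) (n : ℕ) :
    x.obj n ⟶ Xo x N u₀ n :=
  if h : n < N then eqToHom (Xo_pos x N u₀ h).symm
  else
    haveI := hiso n (le_of_not_gt h)
    inv (x.map (homOfLE (le_of_not_gt h))) ≫ i₀ ≫ eqToHom (Xo_neg x N u₀ h).symm

variable (p₀ : u₀ ⟶ y.obj N) (f : x ⟶ y)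

def papp (n : ℕ) : Xo x N u₀ n ⟶ y.obj n :=
  if h : n < N then eqToHom (Xo_pos x N u₀ h) ≫ f.app n
  else eqToHom (Xo_neg x N u₀ h) ≫ p₀ ≫ y.map (homOfLE (le_of_not_gt h))

lemma inat (hiso : ∀ (n : ℕ) (h : N ≤ n), IsIso (x.map (homOfLE h))) (n : ℕ) :
    x.map (homOfLE (n.le_add_right 1)) ≫ iapp x N u₀ i₀ hiso (n + 1) =
      iapp x N u₀ i₀ hiso n ≫ G x N u₀ i₀ n := by
  by_cases h1 : n + 1 < N
  · have h2 : n < N := Nat.lt_of_succ_lt h1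
    simp [iapp, G, dif_pos h1, dif_pos h2]
  · by_cases h2 : n < N
    · obtain rfl : N = n + 1 := by omega
      haveI := hiso (n + 1) le_rfl
      simp [iapp, G, dif_neg h1, dif_pos h2]
    · haveI iA : IsIso (x.map (homOfLE (le_of_not_gt h2))) := hiso n (le_of_not_gt h2)
      haveI iB : IsIso (x.map (homOfLE (le_of_not_gt h1))) := hiso (n + 1) (le_of_not_gt h1)
      have key : x.map (homOfLE (n.le_add_right 1)) ≫ inv (x.map (homOfLE (le_of_not_gt h1))) =
          inv (x.map (homOfLE (le_of_not_gt h2))) := by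
        rw [IsIso.comp_inv_eq, IsIso.eq_inv_comp, ← x.map_comp]
        exact congrArg x.map (Subsingleton.elim _ _)
      simp only [iapp, dif_neg h1, dif_neg h2, G]
      rw [reassoc_of% key]
      simp

lemma pnat (hfp : i₀ ≫ p₀ = f.app N) (n : ℕ) :
    G x N u₀ i₀ n ≫ papp x y N u₀ p₀ f (n + 1) =
      papp x y N u₀ p₀ f n ≫ y.map (homOfLE (n.le_add_right 1)) := by
  by_cases h1 : n + 1 < N
  · have h2 : n < N := Nat.lt_of_succ_lt h1
    simp [papp, G, dif_pos h1, dif_pos h2]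
  · by_cases h2 : n < N
    · obtain rfl : N = n + 1 := by omega
      simp [papp, G, dif_neg h1, dif_pos h2, hfp, reassoc_of% hfp]
    · simp only [papp, G, dif_neg h1, dif_neg h2]
      rw [show (homOfLE (le_of_not_gt h1) : (N : ℕ) ⟶ n + 1) =
        homOfLE (le_of_not_gt h2) ≫ homOfLE (Nat.le_succ n) from Subsingleton.elim _ _,
        y.map_comp]
      simp

lemma icomp (hiso : ∀ (n : ℕ) (h : N ≤ n), IsIso (x.map (homOfLE h)))
    (hfp : i₀ ≫ p₀ = f.app N) (n : ℕ) :
    iapp x N u₀ i₀ hiso n ≫ papp x y N u₀ p₀ f n = f.app n := by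
  by_cases h : n < N
  · simp [iapp, papp, dif_pos h]
  · haveI := hiso n (le_of_not_gt h)
    simp only [iapp, papp, dif_neg h]
    simp [reassoc_of% hfp]

lemma U_map_succ (n : ℕ) :
    (U x N u₀ i₀).map (homOfLE (n.le_add_right 1)) = G x N u₀ i₀ n :=
  Functor.ofSequence_map_homOfLE_succ _ n

end FactorAux

theorem factorization_bounded {w : MorphismProperty C} (hw : AdmissibleClass w)
    (hfac : ∀ {a b : C} (f : a ⟶ b),
      ∃ (u : C) (i : a ⟶ u) (p : u ⟶ b), Mono i ∧ w p ∧ i ≫ p = f)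
    {x y : ℕ ⥤ C} (f : x ⟶ y)
    (hx : BoundedFiltered x) (hy : WeaklyBounded w y) :
    ∃ (u : ℕ ⥤ C) (i : x ⟶ u) (p : u ⟶ y),
      Mono i ∧ StableWeq w p ∧ i ≫ p = f ∧ BoundedFiltered u := by
  obtain ⟨b, hb⟩ := hx
  obtain ⟨M, hM⟩ := hy
  set N := max b M with hN
  have hiso : ∀ (n : ℕ) (h : N ≤ n), IsIso (x.map (homOfLE h)) := by
    intro n h
    induction n, h using Nat.le_induction with
    | base =>
        rw [show (homOfLE (le_refl N) : (N : ℕ) ⟶ N) = 𝟙 _ from Subsingleton.elim _ _, x.map_id]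
        infer_instance
    | succ n hn ih =>
        rw [show (homOfLE (by omega) : (N : ℕ) ⟶ n + 1) =
          homOfLE hn ≫ homOfLE (Nat.le_succ n) from Subsingleton.elim _ _, x.map_comp]
        haveI := hb n (le_trans (le_max_left b M) hn)
        exact IsIso.comp_isIso
  have hwy : ∀ (n : ℕ) (h : N ≤ n), w (y.map (homOfLE h)) := by
    intro n h
    induction n, h using Nat.le_induction with
    | base =>
        refine hw.of_isIso _ ?_
        rw [show (homOfLE (le_refl N) : (N : ℕ) ⟶ N) = 𝟙 _ from Subsingleton.elim _ _, y.map_id]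
        infer_instance
    | succ n hn ih =>
        rw [show (homOfLE (by omega) : (N : ℕ) ⟶ n + 1) =
          homOfLE hn ≫ homOfLE (Nat.le_succ n) from Subsingleton.elim _ _, y.map_comp]
        exact hw.comp_mem _ _ ih (hM n (le_trans (le_max_right b M) hn))
  obtain ⟨u₀, i₀, p₀, hm, hwp, hfp⟩ := hfac (f.app N)
  refine ⟨FactorAux.U x N u₀ i₀,
    NatTrans.ofSequence (F := x) (G := FactorAux.U x N u₀ i₀)
      (FactorAux.iapp x N u₀ i₀ hiso) (fun n => ?_),
    NatTrans.ofSequence (F := FactorAux.U x N u₀ i₀) (G := y)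
      (FactorAux.papp x y N u₀ p₀ f) (fun n => ?_),
    ?_, ?_, ?_, ?_⟩
  · rw [FactorAux.U_map_succ]
    exact FactorAux.inat x N u₀ i₀ hiso n
  · rw [FactorAux.U_map_succ]
    exact FactorAux.pnat x y N u₀ i₀ p₀ f hfp n
  · refine @NatTrans.mono_of_mono_app _ _ _ _ _ _ _ ?_
    intro n
    show Mono (FactorAux.iapp x N u₀ i₀ hiso n)
    by_cases h : n < N
    · simp only [FactorAux.iapp, dif_pos h]
      infer_instance
    · simp only [FactorAux.iapp, dif_neg h]
      haveI := hiso n (le_of_not_gt h)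
      haveI := hm
      infer_instance
  · refine ⟨N, fun n hn => ?_⟩
    show w (FactorAux.papp x y N u₀ p₀ f n)
    simp only [FactorAux.papp, dif_neg (not_lt.mpr hn)]
    exact hw.comp_mem _ _ (hw.of_isIso _ inferInstance)
      (hw.comp_mem _ _ hwp (hwy n _))
  · ext n
    simp only [NatTrans.comp_app, NatTrans.ofSequence_app]
    exact FactorAux.icomp x y N u₀ i₀ p₀ f hiso hfp n
  · refine ⟨N, fun n hn => ?_⟩
    rw [show (homOfLE (Nat.le_succ n) : (n : ℕ) ⟶ n + 1) =
      homOfLE (n.le_add_right 1) from rfl, FactorAux.U_map_succ]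
    simp only [FactorAux.G, dif_neg (by omega : ¬ n + 1 < N), dif_neg (by omega : ¬ n < N)]
    generalize_proofs hG
    exact (eqToIso hG).isIso_hom
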